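/- Let ⊳ be a compact multi-evaluation relation satisfying the property that P ⊳ Q iff some p ∈ P has {p} ⊳ Q. Then the set ⫫ = { p : {p} ⊳ ∅ } belongs to the realizability structure generated by ⊳, and it is contained in every pole of that structure; i.e., ⫫ is the smallest pole of the generated structure. -/

import Mathlib

variable {Proc : Type*}

/-- A multi-evaluation relation over a one-step relation `step`. -/
def IsEvalRel (step : Proc → Proc → Prop) (R : Set Proc → Set Proc → Prop) : Prop :=
  (∀ p q : Proc, step p q → R {p} {q}) ∧
  (∀ p : Proc, R {p} {p}) ∧
  (∀ (P Q P' Q' : Set Proc) (r : Proc),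
    R P (Q ∪ {r}) → R (P' ∪ {r}) Q' → R (P ∪ P') (Q ∪ Q')) ∧
  (∀ P Q P' Q' : Set Proc, R P Q → P ⊆ P' → Q ⊆ Q' → R P' Q')

/-- A pole: a set of processes closed by anti-evaluation. -/
def IsPole (step : Proc → Proc → Prop) (po : Set Proc) : Prop :=
  ∀ p q : Proc, Relation.ReflTransGen step p q → q ∈ po → p ∈ po

/-- The multi-evaluation relation associated with a realizability structure `S`. -/
def relOf (S : Set (Set Proc)) (P Q : Set Proc) : Prop :=
  ∀ po ∈ S, Q ⊆ po → (P ∩ po).Nonempty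

/-- The realizability structure generated by a relation `R`. -/
def genStruct (step : Proc → Proc → Prop) (R : Set Proc → Set Proc → Prop) :
    Set (Set Proc) :=
  {po | IsPole step po ∧ ∀ P Q : Set Proc, R P Q → Q ⊆ po → (P ∩ po).Nonempty}

/-- For a compact multi-evaluation relation `⊳` satisfying `P ⊳ Q ↔ ∃ p ∈ P, {p} ⊳ Q`,
the set `{p | {p} ⊳ ∅}` is the smallest pole of the generated realizability
structure. -/
theorem stmt_10 {Proc : Type*} (step : Proc → Proc → Prop)
    (R : Set Proc → Set Proc → Prop) (hR : IsEvalRel step R)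
    (hcompact : ∀ P Q : Set Proc, R P Q →
      ∃ P₀ Q₀ : Set Proc, P₀.Finite ∧ Q₀.Finite ∧ P₀ ⊆ P ∧ Q₀ ⊆ Q ∧ R P₀ Q₀)
    (hsing : ∀ P Q : Set Proc, R P Q ↔ ∃ p ∈ P, R {p} Q) :
    {p : Proc | R {p} ∅} ∈ genStruct step R ∧
      ∀ po ∈ genStruct step R, {p : Proc | R {p} ∅} ⊆ po := by
  obtain ⟨hstep, hid, hcut, hweak⟩ := hR
  set pole : Set Proc := {p : Proc | R {p} ∅} with hpole
  have key : ∀ Q : Set Proc, Q.Finite → Q ⊆ pole → ∀ P, R P Q → R P ∅ := by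
    intro Q hQ
    refine Set.Finite.induction_on Q hQ (fun _ P h => h) ?_
    intro r Q' _ _ ih hsub P hPQ
    have hr : R {r} ∅ := hsub (Set.mem_insert r Q')
    have h1 : R P (Q' ∪ {r}) := by rwa [Set.union_singleton]
    have h2 : R (∅ ∪ {r}) ∅ := by rwa [Set.empty_union]
    have := hcut P Q' ∅ ∅ r h1 h2
    rw [Set.union_empty, Set.union_empty] at this
    exact ih (fun x hx => hsub (Set.mem_insert_of_mem _ hx)) P this
  constructor
  · refine ⟨?_, ?_⟩
    · intro p q hpq hq
      induction hpq with
      | refl => exact hq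
      | @tail b c _ hbc ih =>
        have h1 : R {b} (∅ ∪ {c}) := by rw [Set.empty_union]; exact hstep b c hbc
        have h2 : R (∅ ∪ {c}) ∅ := by rw [Set.empty_union]; exact hq
        have := hcut {b} ∅ ∅ ∅ c h1 h2
        rw [Set.union_empty, Set.union_empty] at this
        exact ih this
    · intro P Q hPQ hQ
      obtain ⟨P₀, Q₀, _, hQ₀f, hP₀s, hQ₀s, hR₀⟩ := hcompact P Q hPQ
      have : R P₀ ∅ := key Q₀ hQ₀f (hQ₀s.trans hQ) P₀ hR₀
      obtain ⟨p, hp, hpR⟩ := (hsing P₀ ∅).mp this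
      exact ⟨p, hP₀s hp, hpR⟩
  · intro po hpo p hp
    obtain ⟨p', hp', hp'po⟩ := hpo.2 {p} ∅ hp (Set.empty_subset po)
    cases hp'
    exact hp'po
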